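/- Let n ≥ 2 and 0 < r < 1, and let Σ = {x ∈ ℝ^{n+1} : |x| = r} be the sphere of radius r centered at the origin. For x ∈ Σ with x_{n+1} ≠ r² define Φ(x) = ( (x₁, …, x_n)/(r² − x_{n+1}) , r√(1 − r²)/|r² − x_{n+1}| ) ∈ ℝ^n × ℝ (the surface map of Σ). Then the image {Φ(x) : x ∈ Σ, x_{n+1} ≠ r²} is exactly the union of the two upper hyperboloid sheets { (y, t) ∈ ℝ^n × ℝ : t > 0 and (t + r/√(1 − r²))² − |y|² = 1/(1 − r²) } ∪ { (y, t) ∈ ℝ^n × ℝ : t > 0 and (t − r/√(1 − r²))² − |y|² = 1/(1 − r²) }. -/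

import Mathlib

noncomputable def spherePhi (n : ℕ) (r : ℝ) (x : EuclideanSpace ℝ (Fin (n + 1))) :
    EuclideanSpace ℝ (Fin n) × ℝ :=
  ((WithLp.toLp 2 (fun i : Fin n => x i.castSucc / (r ^ 2 - x (Fin.last n))) : EuclideanSpace ℝ (Fin n)),
    r * Real.sqrt (1 - r ^ 2) / |r ^ 2 - x (Fin.last n)|)

lemma norm_sq_euc {m : ℕ} (v : EuclideanSpace ℝ (Fin m)) : ‖v‖ ^ 2 = ∑ i, v i ^ 2 := by
  rw [EuclideanSpace.norm_eq, Real.sq_sqrt (by positivity)]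
  simp [sq_abs]

lemma keyA (r c d : ℝ) (hc : c ≠ 0) (hd : d ≠ 0) (hc2 : c ^ 2 = 1 - r ^ 2) :
    (r * c / d + r / c) ^ 2 - (r ^ 2 - (r ^ 2 - d) ^ 2) / d ^ 2 = 1 / c ^ 2 := by
  field_simp
  linear_combination (r ^ 2 * c ^ 2 + d ^ 2) * hc2

lemma keyB (r c e : ℝ) (hc : c ≠ 0) (he : e ≠ 0) (hc2 : c ^ 2 = 1 - r ^ 2) :
    (r * c / e - r / c) ^ 2 - (r ^ 2 - (r ^ 2 + e) ^ 2) / e ^ 2 = 1 / c ^ 2 := by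
  field_simp
  linear_combination (r ^ 2 * c ^ 2 + e ^ 2) * hc2

lemma keyC (r c t : ℝ) (hc : c ≠ 0) (ht : t ≠ 0) (hc2 : c ^ 2 = 1 - r ^ 2) :
    (r * c / t) ^ 2 * ((t + r / c) ^ 2 - 1 / c ^ 2) + (r ^ 2 - r * c / t) ^ 2 = r ^ 2 := by
  field_simp
  linear_combination (r ^ 2 * (t ^ 2 + 1)) * hc2

lemma keyD (r c t : ℝ) (hc : c ≠ 0) (ht : t ≠ 0) (hc2 : c ^ 2 = 1 - r ^ 2) :
    (-(r * c / t)) ^ 2 * ((t - r / c) ^ 2 - 1 / c ^ 2) + (r ^ 2 - -(r * c / t)) ^ 2 = r ^ 2 := by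
  field_simp
  linear_combination (r ^ 2 * (t ^ 2 + 1)) * hc2

/-- The image of the surface map of the sphere of radius `r` centered at the origin is the
union of the two upper elliptic hyperboloid sheets
`(t ± r/√(1 − r²))² − |y|² = 1/(1 − r²)`, `t > 0`. -/
theorem stmt9 (n : ℕ) (hn : 2 ≤ n) (r : ℝ) (hr0 : 0 < r) (hr1 : r < 1) :
    spherePhi n r ''
        {x : EuclideanSpace ℝ (Fin (n + 1)) | ‖x‖ = r ∧ x (Fin.last n) ≠ r ^ 2} =
      {p : EuclideanSpace ℝ (Fin n) × ℝ | 0 < p.2 ∧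
          (p.2 + r / Real.sqrt (1 - r ^ 2)) ^ 2 - ‖p.1‖ ^ 2 = 1 / (1 - r ^ 2)} ∪
        {p : EuclideanSpace ℝ (Fin n) × ℝ | 0 < p.2 ∧
          (p.2 - r / Real.sqrt (1 - r ^ 2)) ^ 2 - ‖p.1‖ ^ 2 = 1 / (1 - r ^ 2)} := by
  have h1r : (0:ℝ) < 1 - r ^ 2 := by nlinarith
  set c := Real.sqrt (1 - r ^ 2) with hcdef
  have hc0 : 0 < c := Real.sqrt_pos.mpr h1r
  have hc2 : c ^ 2 = 1 - r ^ 2 := Real.sq_sqrt h1r.le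
  ext ⟨y, t⟩
  simp only [Set.mem_image, Set.mem_union, Set.mem_setOf_eq]
  constructor
  · rintro ⟨x, ⟨hx, hxl⟩, hΦ⟩
    set s := x (Fin.last n) with hs
    have hd : r ^ 2 - s ≠ 0 := sub_ne_zero.mpr (Ne.symm hxl)
    have hsum : ∑ i : Fin n, x i.castSucc ^ 2 = r ^ 2 - s ^ 2 := by
      have h2 : ∑ i : Fin (n+1), x i ^ 2 = r ^ 2 := by
        rw [← norm_sq_euc x, hx]
      rw [Fin.sum_univ_castSucc] at h2; linarith
    obtain ⟨hy, ht⟩ :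
        (fun i => x i.castSucc / (r ^ 2 - s)) = y ∧ r * c / |r ^ 2 - s| = t := by
      simp only [spherePhi, Prod.ext_iff] at hΦ
      exact ⟨congrArg WithLp.ofLp hΦ.1, hΦ.2⟩
    have habs : 0 < |r ^ 2 - s| := abs_pos.mpr hd
    have htpos : 0 < t := ht ▸ div_pos (by positivity) habs
    have hny : ‖y‖ ^ 2 = (r ^ 2 - s ^ 2) / (r ^ 2 - s) ^ 2 := by
      rw [norm_sq_euc, ← hy]
      simp only [div_pow, ← Finset.sum_div, hsum]
    rcases hd.lt_or_gt with hdneg | hdpos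
    · right
      refine ⟨htpos, ?_⟩
      rw [← ht, hny, abs_of_neg hdneg, neg_sub, ← hc2,
        show ((r:ℝ) ^ 2 - s) ^ 2 = (s - r ^ 2) ^ 2 from by ring]
      have he : s - r ^ 2 ≠ 0 := fun h => hd (by linarith)
      linear_combination keyB r c (s - r ^ 2) hc0.ne' he hc2
    · left
      refine ⟨htpos, ?_⟩
      rw [← ht, hny, abs_of_pos hdpos, ← hc2]
      linear_combination keyA r c (r ^ 2 - s) hc0.ne' hd hc2
  · rintro (⟨ht, heq⟩ | ⟨ht, heq⟩)
    · set d := r * c / t with hddef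
      have hd0 : 0 < d := by positivity
      set x : EuclideanSpace ℝ (Fin (n+1)) := WithLp.toLp 2 (Fin.snoc (α := fun _ => ℝ) (fun i => d * y i) (r ^ 2 - d))
        with hxdef
      have hcast : ∀ i : Fin n, x i.castSucc = d * y i := fun i => Fin.snoc_castSucc (α := fun _ => ℝ) (r ^ 2 - d) (fun i => d * y i) i
      have hlast : x (Fin.last n) = r ^ 2 - d := Fin.snoc_last (α := fun _ => ℝ) (r ^ 2 - d) (fun i => d * y i)
      have hy2 : ‖y‖ ^ 2 = (t + r / c) ^ 2 - 1 / c ^ 2 := by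
        rw [hc2]; linarith
      have hnx : ‖x‖ ^ 2 = r ^ 2 := by
        rw [norm_sq_euc x, Fin.sum_univ_castSucc]
        simp only [hcast, hlast, mul_pow, ← Finset.mul_sum]
        rw [← norm_sq_euc y, hy2, hddef]
        exact keyC r c t hc0.ne' ht.ne' hc2
      refine ⟨x, ⟨?_, ?_⟩, ?_⟩
      · nlinarith [norm_nonneg x, hnx]
      · rw [hlast]; intro h; exact hd0.ne' (by linarith)
      · rw [Prod.ext_iff]
        constructor
        · show (WithLp.toLp 2 (fun i : Fin n => x i.castSucc / (r ^ 2 - x (Fin.last n))) : EuclideanSpace ℝ (Fin n)) = y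
          ext i
          show x i.castSucc / (r ^ 2 - x (Fin.last n)) = y i
          rw [hcast i, hlast, show r ^ 2 - (r ^ 2 - d) = d from by ring,
            mul_div_cancel_left₀ _ hd0.ne']
        · show r * c / |r ^ 2 - x (Fin.last n)| = t
          rw [hlast, show r ^ 2 - (r ^ 2 - d) = d from by ring, abs_of_pos hd0, hddef]
          field_simp
    · set d := -(r * c / t) with hddef
      have hrc : 0 < r * c / t := by positivity
      have hd0 : d < 0 := by rw [hddef]; linarith
      set x : EuclideanSpace ℝ (Fin (n+1)) := WithLp.toLp 2 (Fin.snoc (α := fun _ => ℝ) (fun i => d * y i) (r ^ 2 - d))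
        with hxdef
      have hcast : ∀ i : Fin n, x i.castSucc = d * y i := fun i => Fin.snoc_castSucc (α := fun _ => ℝ) (r ^ 2 - d) (fun i => d * y i) i
      have hlast : x (Fin.last n) = r ^ 2 - d := Fin.snoc_last (α := fun _ => ℝ) (r ^ 2 - d) (fun i => d * y i)
      have hy2 : ‖y‖ ^ 2 = (t - r / c) ^ 2 - 1 / c ^ 2 := by
        rw [hc2]; linarith
      have hnx : ‖x‖ ^ 2 = r ^ 2 := by
        rw [norm_sq_euc x, Fin.sum_univ_castSucc]
        simp only [hcast, hlast, mul_pow, ← Finset.mul_sum]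
        rw [← norm_sq_euc y, hy2, hddef]
        exact keyD r c t hc0.ne' ht.ne' hc2
      refine ⟨x, ⟨?_, ?_⟩, ?_⟩
      · nlinarith [norm_nonneg x, hnx]
      · rw [hlast]; intro h; exact hd0.ne (by linarith)
      · rw [Prod.ext_iff]
        constructor
        · show (WithLp.toLp 2 (fun i : Fin n => x i.castSucc / (r ^ 2 - x (Fin.last n))) : EuclideanSpace ℝ (Fin n)) = y
          ext i
          show x i.castSucc / (r ^ 2 - x (Fin.last n)) = y i
          rw [hcast i, hlast, show r ^ 2 - (r ^ 2 - d) = d from by ring,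
            mul_div_cancel_left₀ _ hd0.ne]
        · show r * c / |r ^ 2 - x (Fin.last n)| = t
          rw [hlast, show r ^ 2 - (r ^ 2 - d) = d from by ring, abs_of_neg hd0, hddef,
            neg_neg]
          field_simp
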